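/- Let A* be a saturated Dieudonné algebra. Then the map F₁ : W₁(A*) → (H*(A*/p), β) induced by F on the quotient W₁(A*) = A*/(VA* + dVA*) is an isomorphism of cochain complexes. -/
import Mathlib


namespace Statement3

variable {A : ℕ → Type} [∀ n, AddCommGroup (A n)]

/-- `p`-th power in degree `0` of the graded multiplication. -/
def gradedPow0 (mul : ∀ i j, A i →+ A j →+ A (i + j)) (one : A 0) : A 0 → ℕ → A 0
  | _, 0 => one
  | x, (n + 1) => mul 0 0 x (gradedPow0 mul one x n)

/-- Equality in `W₁(A*) = A*/(V A* + d V A*)` in degree `i`. -/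
def wOneEq (d : ∀ n, A n →+ A (n + 1)) (V : ∀ n, A n → A n) :
    ∀ i, A i → A i → Prop
  | 0, x, x' => ∃ a, x - x' = V 0 a
  | (j + 1), x, x' => ∃ a b, x - x' = V (j + 1) a + d j (V j b)

/-- Equality in `H^i(A*/p)`: the difference lies in `p A^i + d A^{i-1}`. -/
def hModPEq (p : ℕ) (d : ∀ n, A n →+ A (n + 1)) : ∀ i, A i → A i → Prop
  | 0, x, x' => ∃ u, x - x' = (p : ℤ) • u
  | (j + 1), x, x' => ∃ u v, x - x' = (p : ℤ) • u + d j v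

end Statement3

open Statement3 in
/-- Let `A*` be a saturated Dieudonné algebra with Verschiebung `V`
(the unique operator with `F (V x) = p x`).  Then the map
`F₁ : W₁(A*) = A*/(V A* + d V A*) → (H^*(A*/p), β)` induced by `F` is an
isomorphism of cochain complexes, stated here on representatives:
`F` lands in mod-`p` cocycles, and `F₁` is injective and surjective in every degree. -/
theorem statement3
    (p : ℕ) (hp : p.Prime)
    (A : ℕ → Type) [∀ n, AddCommGroup (A n)]
    (d : ∀ n, A n →+ A (n + 1))
    (hdd : ∀ n (x : A n), d (n + 1) (d n x) = 0)
    (F : ∀ n, A n →+ A n)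
    (one : A 0)
    (mul : ∀ i j, A i →+ A j →+ A (i + j))
    (hFmul : ∀ i j (x : A i) (y : A j),
      F (i + j) (mul i j x y) = mul i j (F i x) (F j y))
    (hFone : F 0 one = one)
    (hFp : ∀ x : A 0, ∃ y, F 0 x = gradedPow0 mul one x p + (p : ℤ) • y)
    (hdF : ∀ n (x : A n), d n (F n x) = (p : ℤ) • F (n + 1) (d n x))
    (htf : ∀ n (x : A n), (p : ℤ) • x = 0 → x = 0)
    -- saturation: `φ_F = p^n • F` is a bijection onto `(η_p A)^n`
    (hsat : ∀ n, (Function.Injective fun x : A n => (p : ℤ) ^ n • F n x) ∧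
      ∀ y : A n, (∃ z, y = (p : ℤ) ^ n • z) →
        (∃ w, d n y = (p : ℤ) ^ (n + 1) • w) →
        ∃ x, (p : ℤ) ^ n • F n x = y)
    -- the Verschiebung
    (V : ∀ n, A n → A n)
    (hV : ∀ n (x : A n), F n (V n x) = (p : ℤ) • x) :
    ∀ i : ℕ,
      -- `F` of anything is a cocycle mod `p`, so `F₁` lands in `H^i(A*/p)`
      (∀ x : A i, ∃ w, d i (F i x) = (p : ℤ) • w) ∧
      -- `F₁` is injective
      (∀ x x' : A i, hModPEq p d i (F i x) (F i x') → wOneEq d V i x x') ∧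
      -- `F₁` is surjective
      (∀ y : A i, (∃ w, d i y = (p : ℤ) • w) → ∃ x, hModPEq p d i (F i x) y) := by

  have hcancel : ∀ n (a b : A n), (p : ℤ) • a = (p : ℤ) • b → a = b := by
    intro n a b h
    have := htf n (a - b) (by rw [smul_sub, h, sub_self])
    exact sub_eq_zero.mp this
  have htfpow : ∀ (k n : ℕ) (x : A n), (p : ℤ) ^ k • x = 0 → x = 0 := by
    intro k
    induction k with
    | zero => intro n x h; simpa using h
    | succ k ih =>
      intro n x h
      apply ih n
      apply htf
      rw [← mul_smul, ← pow_succ']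
      exact h
  have hFinj : ∀ n, Function.Injective (F n) := by
    intro n x x' h
    exact (hsat n).1 (by simp [h])
  have hFdV : ∀ n (x : A n), F (n + 1) (d n (V n x)) = d n x := by
    intro n x
    apply hcancel
    rw [← hdF, hV, map_zsmul]
  intro i
  refine ⟨fun x => ⟨F (i + 1) (d i x), hdF i x⟩, ?_, ?_⟩
  · intro x x' h
    cases i with
    | zero =>
      obtain ⟨u, hu⟩ := h
      exact ⟨u, hFinj 0 (by rw [map_sub, hu, hV])⟩
    | succ j =>
      obtain ⟨u, v, huv⟩ := h
      refine ⟨u, v, hFinj (j + 1) ?_⟩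
      rw [map_sub, huv, map_add, hV, hFdV]
  · rintro y ⟨w, hw⟩
    obtain ⟨x, hx⟩ := (hsat i).2 ((p : ℤ) ^ i • y) ⟨y, rfl⟩
      ⟨w, by rw [map_zsmul, hw, smul_smul, ← pow_succ]⟩
    have hFy : F i x = y :=
      sub_eq_zero.mp (htfpow i i (F i x - y) (by rw [smul_sub, hx, sub_self]))
    cases i with
    | zero => exact ⟨x, 0, by rw [hFy, sub_self, smul_zero]⟩
    | succ j => exact ⟨x, 0, 0, by simp [hFy]⟩
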